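/- Let β > 0, G > 0, g > 0, and define F(r) = ∫₀^r e^{−1/ρ⁴} ρ² dρ and the metric factor A(r) = 1 − (8πG/(3β)) r² + (2^{9/4} π G g^{3/2} / (β^{1/4} r)) · F(2^{1/4} r / (β^{1/4} g^{1/2})) for r > 0. Then the Kretschmann scalar K(r) = ((r² A''(r))² + 4 (r A'(r))² + 4 (A(r) − 1)²) / r⁴ satisfies lim_{r→0⁺} K(r) = 512 π² G² / (3 β²). In particular the center r = 0 is a regular point of the curvature: the magnetically charged black hole of the exponential model is free of curvature singularity. -/

import Mathlib

open Topology Filter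

noncomputable def G0 (ρ : ℝ) : ℝ := Real.exp (-1 / ρ ^ 4) * ρ ^ 2
noncomputable def G1 (ρ : ℝ) : ℝ := Real.exp (-1 / ρ ^ 4) * (4 / ρ ^ 3 + 2 * ρ)

lemma contG0 : Continuous G0 := by
  rw [continuous_iff_continuousAt]
  intro x
  rcases eq_or_ne x 0 with rfl | hx
  · have h0 : G0 0 = 0 := by simp [G0]
    rw [ContinuousAt, h0]
    refine squeeze_zero_norm (a := fun ρ : ℝ => ρ ^ 2) (fun ρ => ?_) ?_
    · 
      have h1 : Real.exp (-1 / ρ ^ 4) ≤ 1 := by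
        rw [Real.exp_le_one_iff, neg_div]
        have : (0:ℝ) ≤ 1 / ρ ^ 4 := by positivity
        linarith
      have h2 : (0:ℝ) ≤ Real.exp (-1 / ρ ^ 4) := (Real.exp_pos _).le
      have : ‖G0 ρ‖ = Real.exp (-1 / ρ ^ 4) * ρ ^ 2 := by
        simp only [G0, Real.norm_eq_abs]
        rw [abs_of_nonneg (by positivity)]
      rw [this]
      nlinarith [sq_nonneg ρ]
    · simpa using ((continuous_pow 2).tendsto (0:ℝ))
  · have : ContinuousAt (fun ρ : ℝ => -1 / ρ ^ 4) x :=
      (continuousAt_const.div ((continuous_pow 4).continuousAt) (pow_ne_zero 4 hx))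
    exact (Real.continuous_exp.continuousAt.comp this).mul ((continuous_pow 2).continuousAt)

lemma hasDerivAt_G0 {x : ℝ} (hx : x ≠ 0) : HasDerivAt G0 (G1 x) x := by
  have h0 : HasDerivAt (fun ρ : ℝ => -1 / ρ ^ 4) (4 / x ^ 5) x := by
    have hp : HasDerivAt (fun ρ : ℝ => ρ ^ 4) ((4:ℕ) * x ^ 3) x := by
      simpa using hasDerivAt_pow 4 x
    have := (hasDerivAt_const x (-1:ℝ)).div hp (pow_ne_zero 4 hx)
    refine this.congr_deriv ?_
    field_simp
    ring
  have h1 : HasDerivAt (fun ρ : ℝ => Real.exp (-1 / ρ ^ 4))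
      (Real.exp (-1 / x ^ 4) * (4 / x ^ 5)) x := by
    exact (Real.hasDerivAt_exp (-1 / x ^ 4)).comp x h0
  have h2 := h1.mul (hasDerivAt_pow 2 x)
  have : HasDerivAt G0
      (Real.exp (-1 / x ^ 4) * (4 / x ^ 5) * x ^ 2 + Real.exp (-1 / x ^ 4) * (2 * x ^ 1)) x := by
    exact h2.congr_deriv (by norm_num)
  convert this using 1
  simp only [G1]
  field_simp

lemma hasDerivF (F : ℝ → ℝ)
    (hF : ∀ r : ℝ, F r = ∫ ρ in (0 : ℝ)..r, Real.exp (-1 / ρ ^ 4) * ρ ^ 2) (x : ℝ) :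
    HasDerivAt F (G0 x) x := by
  have hFe : F = fun u => ∫ ρ in (0 : ℝ)..u, G0 ρ := by
    funext u; rw [hF u]; rfl
  rw [hFe]
  exact intervalIntegral.integral_hasDerivAt_right (contG0.intervalIntegrable 0 x)
    contG0.aestronglyMeasurable.stronglyMeasurableAtFilter contG0.continuousAt

lemma F_nonneg (F : ℝ → ℝ)
    (hF : ∀ r : ℝ, F r = ∫ ρ in (0 : ℝ)..r, Real.exp (-1 / ρ ^ 4) * ρ ^ 2) {x : ℝ}
    (hx : 0 ≤ x) : 0 ≤ F x := by
  rw [hF]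
  apply intervalIntegral.integral_nonneg hx
  intro t _
  positivity

lemma F_le (F : ℝ → ℝ)
    (hF : ∀ r : ℝ, F r = ∫ ρ in (0 : ℝ)..r, Real.exp (-1 / ρ ^ 4) * ρ ^ 2) {x : ℝ}
    (hx : 0 < x) : F x ≤ Real.exp (-1 / x ^ 4) * x ^ 3 := by
  rw [hF]
  have key : (∫ ρ in (0 : ℝ)..x, Real.exp (-1 / ρ ^ 4) * ρ ^ 2) ≤
      ∫ ρ in (0 : ℝ)..x, Real.exp (-1 / x ^ 4) * ρ ^ 2 := by
    apply intervalIntegral.integral_mono_on hx.le (contG0.intervalIntegrable 0 x)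
      ((continuous_const.mul (continuous_pow 2)).intervalIntegrable 0 x)
    intro t ht
    rcases eq_or_lt_of_le ht.1 with rfl | ht0
    · have h0 : G0 0 = 0 := by simp [G0]
      rw [h0]
      exact mul_nonneg (Real.exp_pos _).le (sq_nonneg _)
    · have h1 : -1 / t ^ 4 ≤ -1 / x ^ 4 := by
        rw [neg_div, neg_div, neg_le_neg_iff]
        exact one_div_le_one_div_of_le (by positivity) (pow_le_pow_left₀ ht0.le ht.2 4)
      exact mul_le_mul_of_nonneg_right (Real.exp_le_exp.2 h1) (by positivity)
  calc (∫ ρ in (0 : ℝ)..x, Real.exp (-1 / ρ ^ 4) * ρ ^ 2) ≤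
      ∫ ρ in (0 : ℝ)..x, Real.exp (-1 / x ^ 4) * ρ ^ 2 := key
    _ = Real.exp (-1 / x ^ 4) * (x ^ 3 / 3) := by
        rw [intervalIntegral.integral_const_mul, integral_pow]
        norm_num
    _ ≤ Real.exp (-1 / x ^ 4) * x ^ 3 := by
        apply mul_le_mul_of_nonneg_left _ (Real.exp_pos _).le
        nlinarith [pow_pos hx 3]
lemma tendsto_aux_x (a : ℝ) (ha : 0 < a) :
    Filter.Tendsto (fun r : ℝ => ((a * r) ^ 4)⁻¹) (nhdsWithin 0 (Set.Ioi 0)) Filter.atTop := by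
  apply tendsto_inv_nhdsGT_zero.comp
  apply tendsto_nhdsWithin_of_tendsto_nhds_of_eventually_within
  · have hcont : Continuous (fun r : ℝ => (a * r) ^ 4) :=
      (continuous_const.mul continuous_id).pow 4
    have h := hcont.tendsto 0
    simp only [mul_zero, zero_pow, ne_eq, OfNat.ofNat_ne_zero, not_false_eq_true] at h
    exact h.mono_left nhdsWithin_le_nhds
  · filter_upwards [self_mem_nhdsWithin] with r hr
    have hr' : (0:ℝ) < r := hr
    exact Set.mem_Ioi.2 (by positivity)

/-- The magnetically charged black hole of the exponential model is free of curvature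
singularity: with `F(r) = ∫₀^r e^{−1/ρ⁴} ρ² dρ` and metric factor
`A(r) = 1 − (8πG/(3β)) r² + (2^{9/4} πG g^{3/2}/(β^{1/4} r)) F(2^{1/4} r/(β^{1/4} g^{1/2}))`,
the Kretschmann scalar satisfies `K(r) → 512π²G²/(3β²)` as `r → 0⁺`. -/
theorem stmt12 (β G g : ℝ) (hβ : 0 < β) (hG : 0 < G) (hg : 0 < g)
    (F : ℝ → ℝ)
    (hF : ∀ r : ℝ, F r = ∫ ρ in (0 : ℝ)..r, Real.exp (-1 / ρ ^ 4) * ρ ^ 2)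
    (A : ℝ → ℝ)
    (hA : ∀ r : ℝ, 0 < r → A r =
      1 - (8 * Real.pi * G / (3 * β)) * r ^ 2 +
        ((2 : ℝ) ^ ((9 : ℝ) / 4) * Real.pi * G * g ^ ((3 : ℝ) / 2) / (β ^ ((1 : ℝ) / 4) * r)) *
          F ((2 : ℝ) ^ ((1 : ℝ) / 4) * r / (β ^ ((1 : ℝ) / 4) * g ^ ((1 : ℝ) / 2))))
    (K : ℝ → ℝ)
    (hK : ∀ r : ℝ, 0 < r → K r =
      ((r ^ 2 * deriv (deriv A) r) ^ 2 + 4 * (r * deriv A r) ^ 2 + 4 * (A r - 1) ^ 2) / r ^ 4) :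
    Tendsto K (𝓝[>] (0 : ℝ)) (𝓝 (512 * Real.pi ^ 2 * G ^ 2 / (3 * β ^ 2))) := by
  have pi_pos := Real.pi_pos
  set c : ℝ := 8 * Real.pi * G / (3 * β) with hc
  set D : ℝ := (2:ℝ) ^ ((9:ℝ)/4) * Real.pi * G * g ^ ((3:ℝ)/2) / β ^ ((1:ℝ)/4) with hD
  set a : ℝ := (2:ℝ) ^ ((1:ℝ)/4) / (β ^ ((1:ℝ)/4) * g ^ ((1:ℝ)/2)) with haa
  have hb4 : (0:ℝ) < β ^ ((1:ℝ)/4) := Real.rpow_pos_of_pos hβ _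
  have hg2 : (0:ℝ) < g ^ ((1:ℝ)/2) := Real.rpow_pos_of_pos hg _
  have h24 : (0:ℝ) < (2:ℝ) ^ ((1:ℝ)/4) := Real.rpow_pos_of_pos two_pos _
  have ha : 0 < a := by rw [haa]; positivity
  -- rewrite A on the positive axis
  have hAB : ∀ r : ℝ, 0 < r → A r = 1 - c * r ^ 2 + D * (F (a * r) / r) := by
    intro r hr
    rw [hA r hr]
    have harg : (2:ℝ) ^ ((1:ℝ)/4) * r / (β ^ ((1:ℝ)/4) * g ^ ((1:ℝ)/2)) = a * r := by
      rw [haa]; ring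
    rw [harg, hc, hD]
    field_simp
  -- first derivative
  have hdB : ∀ r : ℝ, 0 < r → HasDerivAt (fun s : ℝ => 1 - c * s ^ 2 + D * (F (a * s) / s))
      (-(2 * c * r) + D * ((a * G0 (a * r) * r - F (a * r)) / r ^ 2)) r := by
    intro r hr
    have h1 : HasDerivAt (fun s : ℝ => 1 - c * s ^ 2) (-(c * (2 * r ^ 1))) r :=
      ((hasDerivAt_pow 2 r).const_mul c).const_sub 1
    have hin : HasDerivAt (fun s : ℝ => a * s) (a * 1) r := (hasDerivAt_id r).const_mul a
    have hF1 : HasDerivAt (fun s : ℝ => F (a * s)) (G0 (a * r) * (a * 1)) r :=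
      (hasDerivF F hF (a * r)).comp r hin
    have h2 : HasDerivAt (fun s : ℝ => F (a * s) / s)
        ((G0 (a * r) * (a * 1) * r - F (a * r) * 1) / r ^ 2) r := by
      exact hF1.div (hasDerivAt_id r) hr.ne'
    have h3 := h1.add (h2.const_mul D)
    refine h3.congr_deriv ?_
    field_simp
  have hdA : ∀ r : ℝ, 0 < r → deriv A r =
      -(2 * c * r) + D * ((a * G0 (a * r) * r - F (a * r)) / r ^ 2) := by
    intro r hr
    have hev : A =ᶠ[𝓝 r] fun s : ℝ => 1 - c * s ^ 2 + D * (F (a * s) / s) := by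
      filter_upwards [isOpen_Ioi.mem_nhds hr] with x hx
      exact hAB x hx
    rw [hev.deriv_eq]
    exact (hdB r hr).deriv
  -- second derivative
  have hdB2 : ∀ r : ℝ, 0 < r → HasDerivAt
      (fun s : ℝ => -(2 * c * s) + D * ((a * G0 (a * s) * s - F (a * s)) / s ^ 2))
      (-(2 * c) + D * ((a ^ 2 * G1 (a * r) * r ^ 2 - 2 * a * G0 (a * r) * r + 2 * F (a * r)) /
        r ^ 3)) r := by
    intro r hr
    have har : a * r ≠ 0 := (mul_pos ha hr).ne'
    have hin : HasDerivAt (fun s : ℝ => a * s) (a * 1) r := (hasDerivAt_id r).const_mul a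
    have hF1 : HasDerivAt (fun s : ℝ => F (a * s)) (G0 (a * r) * (a * 1)) r :=
      (hasDerivF F hF (a * r)).comp r hin
    have hG0c : HasDerivAt (fun s : ℝ => G0 (a * s)) (G1 (a * r) * (a * 1)) r :=
      (hasDerivAt_G0 har).comp r hin
    have hN : HasDerivAt (fun s : ℝ => a * G0 (a * s) * s - F (a * s))
        ((a * (G1 (a * r) * (a * 1))) * r + (a * G0 (a * r)) * 1 - G0 (a * r) * (a * 1)) r :=
      ((hG0c.const_mul a).mul (hasDerivAt_id r)).sub hF1
    have hQ : HasDerivAt (fun s : ℝ => (a * G0 (a * s) * s - F (a * s)) / s ^ 2)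
        ((((a * (G1 (a * r) * (a * 1))) * r + (a * G0 (a * r)) * 1 - G0 (a * r) * (a * 1)) * r ^ 2 -
          (a * G0 (a * r) * r - F (a * r)) * (↑2 * r ^ 1)) / (r ^ 2) ^ 2) r :=
      hN.div (hasDerivAt_pow 2 r) (pow_ne_zero 2 hr.ne')
    have hlin : HasDerivAt (fun s : ℝ => -(2 * c * s)) (-(2 * c)) r := by
      exact ((hasDerivAt_id r).const_mul (2 * c)).neg.congr_deriv (by ring)
    have h := hlin.add (hQ.const_mul D)
    refine h.congr_deriv ?_
    field_simp
    ring
  have hddA : ∀ r : ℝ, 0 < r → deriv (deriv A) r =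
      -(2 * c) + D * ((a ^ 2 * G1 (a * r) * r ^ 2 - 2 * a * G0 (a * r) * r + 2 * F (a * r)) /
        r ^ 3) := by
    intro r hr
    have hev : deriv A =ᶠ[𝓝 r]
        fun s : ℝ => -(2 * c * s) + D * ((a * G0 (a * s) * s - F (a * s)) / s ^ 2) := by
      filter_upwards [isOpen_Ioi.mem_nhds hr] with x hx
      exact hdA x hx
    rw [hev.deriv_eq]
    exact (hdB2 r hr).deriv
  -- core limits
  have hxT := tendsto_aux_x a ha
  have hE0 : Tendsto (fun r : ℝ => Real.exp (-((a * r) ^ 4)⁻¹)) (𝓝[>] (0:ℝ)) (𝓝 0) :=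
    Real.tendsto_exp_neg_atTop_nhds_zero.comp hxT
  have hE1 : Tendsto (fun r : ℝ => ((a * r) ^ 4)⁻¹ * Real.exp (-((a * r) ^ 4)⁻¹))
      (𝓝[>] (0:ℝ)) (𝓝 0) := by
    have := (Real.tendsto_pow_mul_exp_neg_atTop_nhds_zero 1).comp hxT
    simpa [Function.comp_def] using this
  have hneg : ∀ r : ℝ, -1 / (a * r) ^ 4 = -((a * r) ^ 4)⁻¹ := by
    intro r; rw [neg_div, one_div]
  have hP : Tendsto (fun r : ℝ => F (a * r) / r ^ 3) (𝓝[>] (0:ℝ)) (𝓝 0) := by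
    apply squeeze_zero' (g := fun r : ℝ => a ^ 3 * Real.exp (-((a * r) ^ 4)⁻¹))
    · filter_upwards [self_mem_nhdsWithin] with r hr
      have hr' : (0:ℝ) < r := hr
      exact div_nonneg (F_nonneg F hF (by positivity)) (by positivity)
    · filter_upwards [self_mem_nhdsWithin] with r hr
      have hr' : (0:ℝ) < r := hr
      rw [div_le_iff₀ (by positivity)]
      calc F (a * r) ≤ Real.exp (-1 / (a * r) ^ 4) * (a * r) ^ 3 := F_le F hF (by positivity)
        _ = a ^ 3 * Real.exp (-((a * r) ^ 4)⁻¹) * r ^ 3 := by rw [hneg r]; ring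
    · simpa using hE0.const_mul (a ^ 3)
  have hQ : Tendsto (fun r : ℝ => G0 (a * r) / r ^ 2) (𝓝[>] (0:ℝ)) (𝓝 0) := by
    have heq : (fun r : ℝ => G0 (a * r) / r ^ 2) =ᶠ[𝓝[>] (0:ℝ)]
        fun r : ℝ => a ^ 2 * Real.exp (-((a * r) ^ 4)⁻¹) := by
      filter_upwards [self_mem_nhdsWithin] with r hr
      have hr' : (0:ℝ) < r := hr
      simp only [G0]
      rw [hneg r]
      field_simp
    rw [tendsto_congr' heq]
    simpa using hE0.const_mul (a ^ 2)
  have hR : Tendsto (fun r : ℝ => G1 (a * r) / r) (𝓝[>] (0:ℝ)) (𝓝 0) := by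
    have heq : (fun r : ℝ => G1 (a * r) / r) =ᶠ[𝓝[>] (0:ℝ)]
        fun r : ℝ => 4 * a * (((a * r) ^ 4)⁻¹ * Real.exp (-((a * r) ^ 4)⁻¹)) +
          2 * a * Real.exp (-((a * r) ^ 4)⁻¹) := by
      filter_upwards [self_mem_nhdsWithin] with r hr
      have hr' : (0:ℝ) < r := hr
      have har : a * r ≠ 0 := (mul_pos ha hr').ne'
      simp only [G1]
      rw [hneg r]
      field_simp
    rw [tendsto_congr' heq]
    have := (hE1.const_mul (4 * a)).add (hE0.const_mul (2 * a))
    simpa using this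
  -- assemble
  have t1 : Tendsto (fun r : ℝ => -(2 * c) + D * a ^ 2 * (G1 (a * r) / r) -
      2 * (D * a) * (G0 (a * r) / r ^ 2) + 2 * D * (F (a * r) / r ^ 3))
      (𝓝[>] (0:ℝ)) (𝓝 (-(2 * c))) := by
    have hconst : Tendsto (fun _ : ℝ => -(2 * c)) (𝓝[>] (0:ℝ)) (𝓝 (-(2 * c))) :=
      tendsto_const_nhds
    have := ((hconst.add (hR.const_mul (D * a ^ 2))).sub
      (hQ.const_mul (2 * (D * a)))).add (hP.const_mul (2 * D))
    simpa using this
  have t2 : Tendsto (fun r : ℝ => -(2 * c) + (D * a) * (G0 (a * r) / r ^ 2) -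
      D * (F (a * r) / r ^ 3)) (𝓝[>] (0:ℝ)) (𝓝 (-(2 * c))) := by
    have hconst : Tendsto (fun _ : ℝ => -(2 * c)) (𝓝[>] (0:ℝ)) (𝓝 (-(2 * c))) :=
      tendsto_const_nhds
    have := (hconst.add (hQ.const_mul (D * a))).sub (hP.const_mul D)
    simpa using this
  have t3 : Tendsto (fun r : ℝ => -c + D * (F (a * r) / r ^ 3)) (𝓝[>] (0:ℝ)) (𝓝 (-c)) := by
    have hconst : Tendsto (fun _ : ℝ => -c) (𝓝[>] (0:ℝ)) (𝓝 (-c)) := tendsto_const_nhds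
    have := hconst.add (hP.const_mul D)
    simpa using this
  have hsum : Tendsto (fun r : ℝ =>
      (-(2 * c) + D * a ^ 2 * (G1 (a * r) / r) - 2 * (D * a) * (G0 (a * r) / r ^ 2) +
        2 * D * (F (a * r) / r ^ 3)) ^ 2 +
      4 * (-(2 * c) + (D * a) * (G0 (a * r) / r ^ 2) - D * (F (a * r) / r ^ 3)) ^ 2 +
      4 * (-c + D * (F (a * r) / r ^ 3)) ^ 2)
      (𝓝[>] (0:ℝ)) (𝓝 ((-(2 * c)) ^ 2 + 4 * (-(2 * c)) ^ 2 + 4 * (-c) ^ 2)) :=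
    ((t1.pow 2).add ((t2.pow 2).const_mul 4)).add ((t3.pow 2).const_mul 4)
  have hKeq : (fun r : ℝ =>
      (-(2 * c) + D * a ^ 2 * (G1 (a * r) / r) - 2 * (D * a) * (G0 (a * r) / r ^ 2) +
        2 * D * (F (a * r) / r ^ 3)) ^ 2 +
      4 * (-(2 * c) + (D * a) * (G0 (a * r) / r ^ 2) - D * (F (a * r) / r ^ 3)) ^ 2 +
      4 * (-c + D * (F (a * r) / r ^ 3)) ^ 2) =ᶠ[𝓝[>] (0:ℝ)] K := by
    filter_upwards [self_mem_nhdsWithin] with r hr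
    have hr' : (0:ℝ) < r := hr
    rw [hK r hr', hdA r hr', hddA r hr', hAB r hr']
    field_simp
    ring
  have hval : (-(2 * c)) ^ 2 + 4 * (-(2 * c)) ^ 2 + 4 * (-c) ^ 2 =
      512 * Real.pi ^ 2 * G ^ 2 / (3 * β ^ 2) := by
    rw [hc]
    field_simp
    ring
  rw [← hval]
  exact hsum.congr' hKeq
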